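/- If lim_{x→−∞} Y_x = +∞, then C = { x ∈ ℝ : Y_x − I_x > 0 } and C ≠ ℝ. -/

import Mathlib

open MeasureTheory Filter
open scoped Classical

/-- The covering `C^(n)` obtained after storing the first `n` files
`(x_0, l_0), …, (x_{n-1}, l_{n-1})`: `C^(0) = ∅` and
`C^(k+1) = C^(k) ∪ [x_k, y_k)` where `y_k` is the infimum of the `y ≥ x_k`
such that the free space `(C^(k))ᶜ ∩ [x_k, y)` has Lebesgue measure `l_k`. -/
noncomputable def cover (x l : ℕ → ℝ) : ℕ → Set ℝ
  | 0 => ∅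
  | k + 1 =>
      cover x l k ∪
        Set.Ico (x k)
          (sInf {y : ℝ | x k ≤ y ∧
            volume ((cover x l k)ᶜ ∩ Set.Ico (x k) y) = ENNReal.ofReal (l k)})

/-- The process `Y` associated with the whole family of files: `Y_0 = 0` and
`Y_b - Y_a = Σ_{i : x_i ∈ (a,b]} l_i - (b-a)` for `a < b`. -/
noncomputable def Yinf (x l : ℕ → ℝ) (b : ℝ) : ℝ :=
  (∑' i : ℕ, if 0 < x i ∧ x i ≤ b then l i else 0)
    - (∑' i : ℕ, if b < x i ∧ x i ≤ 0 then l i else 0) - b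

/-- The infimum process `I_z = inf{ Y_y : y ≤ z }`, with values in `EReal`
(it may be `-∞`). -/
noncomputable def Iinf (x l : ℕ → ℝ) (z : ℝ) : EReal :=
  ⨅ y ∈ Set.Iic z, (Yinf x l y : EReal)

namespace CoverAux

variable (x l : ℕ → ℝ)

/-- partial cumulative jump function -/
noncomputable def fn (n : ℕ) (t : ℝ) : ℝ :=
  ∑ i ∈ Finset.range n, if x i ≤ t then l i else 0

/-- the finite-files process -/
noncomputable def Zn (n : ℕ) (t : ℝ) : ℝ := fn x l n t - t

/-- running infimum of `Zn` -/
noncomputable def Mn (n : ℕ) (t : ℝ) : ℝ := sInf (Zn x l n '' Set.Iic t)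

/-- the covered set, as described by the process `Zn` -/
def Dn (n : ℕ) : Set ℝ := {z | ∃ y ≤ z, Zn x l n y < Zn x l n z}

variable {x l}
variable (hl : ∀ i, 0 < l i)

section basic
include hl

lemma fn_nonneg (n : ℕ) (t : ℝ) : 0 ≤ fn x l n t :=
  Finset.sum_nonneg fun i _ => by split <;> simp [le_of_lt (hl i)]

lemma fn_le (n : ℕ) (t : ℝ) : fn x l n t ≤ ∑ i ∈ Finset.range n, l i :=
  Finset.sum_le_sum fun i _ => by split <;> simp [le_of_lt (hl i)]

end basic

include hl in
lemma fn_mono (n : ℕ) {s t : ℝ} (hst : s ≤ t) : fn x l n s ≤ fn x l n t := by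
  refine Finset.sum_le_sum fun i hi => ?_
  rcases Finset.mem_range.1 hi with _
  by_cases h1 : x i ≤ s
  · simp [h1, h1.trans hst]
  · by_cases h2 : x i ≤ t <;> simp [h1, h2] <;> first | rfl | exact le_of_lt (hl i)

lemma fn_eq_of_no_jump (n : ℕ) {s t : ℝ} (hst : s ≤ t)
    (h : ∀ i < n, x i ∉ Set.Ioc s t) : fn x l n t = fn x l n s := by
  refine Finset.sum_congr rfl fun i hi => ?_
  have hi' := Finset.mem_range.1 hi
  by_cases h1 : x i ≤ s
  · simp [h1, h1.trans hst]
  · have h2 : ¬ x i ≤ t := fun h2 => h i hi' ⟨lt_of_not_ge h1, h2⟩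
    simp [h1, h2]

include hl in
/-- `Z` decreases with slope at most 1 : `Z_t ≥ Z_s - (t - s)`. -/
lemma Zn_ge (n : ℕ) {s t : ℝ} (hst : s ≤ t) :
    Zn x l n s - (t - s) ≤ Zn x l n t := by
  have := fn_mono (x := x) (l := l) hl n hst
  simp only [Zn]; linarith

include hl in
lemma Zn_lb (n : ℕ) {y t : ℝ} (hyt : y ≤ t) : -t ≤ Zn x l n y := by
  have := fn_nonneg (x := x) hl n y
  simp only [Zn]; linarith

include hl in
lemma Mn_bddBelow (n : ℕ) (t : ℝ) : BddBelow (Zn x l n '' Set.Iic t) :=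
  ⟨-t, by rintro z ⟨y, hy, rfl⟩; exact Zn_lb hl n hy⟩

lemma Mn_nonempty (n : ℕ) (t : ℝ) : (Zn x l n '' Set.Iic t).Nonempty :=
  ⟨_, Set.mem_image_of_mem _ (Set.mem_Iic.2 le_rfl)⟩

include hl in
lemma Mn_le_Zn (n : ℕ) (t : ℝ) : Mn x l n t ≤ Zn x l n t :=
  csInf_le (Mn_bddBelow hl n t) (Set.mem_image_of_mem _ (Set.mem_Iic.2 le_rfl))

include hl in
lemma Mn_le (n : ℕ) {y t : ℝ} (hyt : y ≤ t) : Mn x l n t ≤ Zn x l n y :=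
  csInf_le (Mn_bddBelow hl n t) (Set.mem_image_of_mem _ hyt)

include hl in
lemma Mn_anti (n : ℕ) {s t : ℝ} (hst : s ≤ t) : Mn x l n t ≤ Mn x l n s :=
  csInf_le_csInf (Mn_bddBelow hl n t) (Mn_nonempty n s)
    (Set.image_mono (Set.Iic_subset_Iic.2 hst))

include hl in
lemma Mn_lip (n : ℕ) {s t : ℝ} (hst : s ≤ t) :
    Mn x l n s - (t - s) ≤ Mn x l n t := by
  refine le_csInf (Mn_nonempty n t) ?_
  rintro z ⟨y, hy, rfl⟩
  rcases le_or_gt y s with h | h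
  · have : Mn x l n s ≤ Zn x l n y := Mn_le hl n h
    linarith
  · have h1 : Zn x l n s - (y - s) ≤ Zn x l n y := Zn_ge hl n h.le
    have h2 : Mn x l n s ≤ Zn x l n s := Mn_le_Zn hl n s
    have := Set.mem_Iic.1 hy
    linarith

include hl in
lemma Mn_continuous (n : ℕ) : Continuous (Mn x l n) := by
  refine (LipschitzWith.of_dist_le_mul (K := 1) fun s t => ?_).continuous
  rw [Real.dist_eq, Real.dist_eq, NNReal.coe_one, one_mul]
  rw [abs_sub_le_iff]
  rcases le_total s t with h | h
  · have h1 : Mn x l n t ≤ Mn x l n s := Mn_anti hl n h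
    have h2 : Mn x l n s - (t - s) ≤ Mn x l n t := Mn_lip hl n h
    have habs : |s - t| = t - s := by rw [abs_of_nonpos (by linarith)]; ring
    constructor <;> linarith
  · have h1 : Mn x l n s ≤ Mn x l n t := Mn_anti hl n h
    have h2 : Mn x l n t - (s - t) ≤ Mn x l n s := Mn_lip hl n h
    have habs : |s - t| = s - t := abs_of_nonneg (by linarith)
    constructor <;> linarith

include hl in
lemma mem_Dn_iff (n : ℕ) {z : ℝ} : z ∈ Dn x l n ↔ Mn x l n z < Zn x l n z := by
  constructor
  · rintro ⟨y, hy, hZ⟩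
    exact lt_of_le_of_lt (Mn_le hl n hy) hZ
  · intro h
    obtain ⟨w, ⟨y, hy, rfl⟩, hw⟩ := exists_lt_of_csInf_lt (Mn_nonempty n z) h
    exact ⟨y, hy, hw⟩

lemma notMem_Dn_iff (n : ℕ) {z : ℝ} :
    z ∉ Dn x l n ↔ ∀ y ≤ z, Zn x l n z ≤ Zn x l n y := by
  simp only [Dn, Set.mem_setOf_eq]
  push_neg
  rfl

include hl in
lemma Mn_ge_of_lt (n : ℕ) {c v : ℝ} (h : ∀ y < c, v ≤ Zn x l n y) :
    v ≤ Mn x l n c := by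
  refine le_csInf (Mn_nonempty n c) ?_
  rintro z ⟨y, hy, rfl⟩
  rcases lt_or_eq_of_le (Set.mem_Iic.1 hy) with hlt | rfl
  · exact h y hlt
  · refine le_of_forall_pos_le_add fun ε hε => ?_
    have h1 : Zn x l n (y - ε) - (y - (y - ε)) ≤ Zn x l n y :=
      Zn_ge hl n (by linarith)
    have h2 := h (y - ε) (by linarith)
    linarith

include hl in
/-- Claim A : if the running infimum strictly decreases on `(c, t]`, there
is a free point in `(c, t]`. -/
lemma exists_free_of_lt (n : ℕ) {c t : ℝ}
    (h : Mn x l n t < Mn x l n c) :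
    ∃ u ∈ Set.Ioc c t, u ∉ Dn x l n := by
  have hct : c < t := by
    by_contra hct
    exact absurd (Mn_anti hl n (le_of_not_gt hct)) (not_le.2 h)
  set v : ℝ := (Mn x l n t + Mn x l n c) / 2 with hv
  have hv1 : Mn x l n t < v := by simp only [hv]; linarith
  have hv2 : v < Mn x l n c := by simp only [hv]; linarith
  obtain ⟨w, ⟨y0, hy0, rfl⟩, hw⟩ := exists_lt_of_csInf_lt (Mn_nonempty n t) hv1
  set P : Set ℝ := {y | Zn x l n y < v} with hP
  have hy0P : y0 ∈ P := hw
  have hPsub : ∀ y ∈ P, c < y := by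
    intro y hy
    by_contra hyc
    have : Mn x l n c ≤ Zn x l n y := Mn_le hl n (le_of_not_gt hyc)
    have : ¬ (Zn x l n y < v) := by linarith
    exact this hy
  have hbdd : BddBelow P := ⟨c, fun y hy => (hPsub y hy).le⟩
  set u : ℝ := sInf P with hu
  have hune : P.Nonempty := ⟨y0, hy0P⟩
  have hut : u ≤ t := le_trans (csInf_le hbdd hy0P) (Set.mem_Iic.1 hy0)
  have huc : c ≤ u := le_csInf hune fun y hy => (hPsub y hy).le
  have hZu : Zn x l n u ≤ v := by
    refine le_of_forall_pos_le_add fun ε hε => ?_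
    obtain ⟨y, hyP, hyu⟩ := exists_lt_of_csInf_lt hune (by linarith : sInf P < u + ε)
    have huy : u ≤ y := csInf_le hbdd hyP
    have h1 : Zn x l n u - (y - u) ≤ Zn x l n y := Zn_ge hl n huy
    have h2 : Zn x l n y < v := hyP
    linarith
  have hcu : c < u := by
    rcases lt_or_eq_of_le huc with h' | h'
    · exact h'
    · exact absurd (le_trans (Mn_le_Zn hl n c) (h' ▸ hZu)) (not_le.2 hv2)
  refine ⟨u, ⟨hcu, hut⟩, (notMem_Dn_iff n).2 fun y hy => ?_⟩
  rcases lt_or_eq_of_le hy with h' | h'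
  · have : y ∉ P := fun hyP => absurd (csInf_le hbdd hyP) (not_le.2 h')
    have : v ≤ Zn x l n y := le_of_not_gt this
    linarith
  · rw [h']

include hl in
/-- Key local lemma: from a free point, with no jump in between, everything
stays free and `M` decreases with slope one. -/
lemma free_propagate (n : ℕ) {e u : ℝ} (he : e ∉ Dn x l n) (heu : e ≤ u)
    (hjump : ∀ i < n, x i ∉ Set.Ioc e u) :
    u ∉ Dn x l n ∧ Mn x l n u = Zn x l n e - (u - e) := by
  have hZw : ∀ w ∈ Set.Icc e u, Zn x l n w = Zn x l n e - (w - e) := by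
    intro w hw
    have : fn x l n w = fn x l n e :=
      fn_eq_of_no_jump n hw.1 fun i hi hx =>
        hjump i hi ⟨hx.1, hx.2.trans hw.2⟩
    simp only [Zn, this]; ring
  have he' := (notMem_Dn_iff n).1 he
  have hufree : u ∉ Dn x l n := by
    refine (notMem_Dn_iff n).2 fun s hs => ?_
    have hZu : Zn x l n u = Zn x l n e - (u - e) := hZw u ⟨heu, le_rfl⟩
    rcases le_or_gt s e with h' | h'
    · have := he' s h'
      linarith
    · have := hZw s ⟨h'.le, hs⟩
      linarith
  refine ⟨hufree, ?_⟩
  have hZu : Zn x l n u = Zn x l n e - (u - e) := hZw u ⟨heu, le_rfl⟩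
  have h1 : Mn x l n u ≤ Zn x l n e - (u - e) := hZu ▸ Mn_le_Zn hl n u
  have h2 : Zn x l n u ≤ Mn x l n u :=
    le_of_not_gt fun hlt => hufree ((mem_Dn_iff hl n).2 hlt)
  linarith

lemma measurable_Zn (n : ℕ) : Measurable (Zn x l n) := by
  have h : Measurable (fn x l n) := by
    refine Finset.measurable_sum _ fun i _ => ?_
    exact Measurable.ite measurableSet_Ici measurable_const measurable_const
  exact h.sub measurable_id

include hl in
lemma measurableSet_Dn (n : ℕ) : MeasurableSet (Dn x l n) := by
  have : Dn x l n = {z | Mn x l n z < Zn x l n z} :=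
    Set.ext fun z => mem_Dn_iff hl n
  rw [this]
  exact measurableSet_lt (Mn_continuous hl n).measurable (measurable_Zn n)

include hl in
/-- gap lemma : measure formula when there is no jump inside `(a,b)`. -/
lemma vol_gap (n : ℕ) {a b : ℝ} (hab : a ≤ b)
    (hjump : ∀ i < n, x i ∉ Set.Ioo a b) :
    volume ((Dn x l n)ᶜ ∩ Set.Ico a b) = ENNReal.ofReal (Mn x l n a - Mn x l n b) := by
  rcases eq_or_lt_of_le hab with rfl | hab'
  · simp
  -- `M` is constant on covered jump-free stretches
  have hMconst : ∀ c d : ℝ, c < d → d ≤ b → a ≤ c →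
      (∀ t ∈ Set.Ioo c d, t ∈ Dn x l n) → Mn x l n d = Mn x l n c := by
    intro c d hcd hdb hac hcov
    have hmono : ∀ t ∈ Set.Ico c d, Mn x l n t = Mn x l n c := by
      intro t ht
      rcases eq_or_lt_of_le ht.1 with rfl | hct
      · rfl
      · by_contra hne
        have hlt : Mn x l n t < Mn x l n c :=
          lt_of_le_of_ne (Mn_anti hl n ht.1) hne
        obtain ⟨u, hu, hufree⟩ := exists_free_of_lt hl n hlt
        exact hufree (hcov u ⟨hu.1, lt_of_le_of_lt hu.2 ht.2⟩)
    have hclosed : IsClosed {t | Mn x l n t = Mn x l n c} :=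
      isClosed_eq (Mn_continuous hl n) continuous_const
    have hd : d ∈ closure (Set.Ico c d) := by
      rw [closure_Ico hcd.ne]
      exact ⟨hcd.le, le_rfl⟩
    exact closure_minimal hmono hclosed hd
  by_cases hne : ((Dn x l n)ᶜ ∩ Set.Ico a b).Nonempty
  · obtain ⟨e0, he0⟩ := hne
    set α : ℝ := sInf ((Dn x l n)ᶜ ∩ Set.Ico a b) with hα
    have hbdd : BddBelow ((Dn x l n)ᶜ ∩ Set.Ico a b) := ⟨a, fun y hy => hy.2.1⟩
    have hnemp : ((Dn x l n)ᶜ ∩ Set.Ico a b).Nonempty := ⟨e0, he0⟩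
    have hαa : a ≤ α := le_csInf hnemp fun y hy => hy.2.1
    have hαb : α < b := lt_of_le_of_lt (csInf_le hbdd he0) he0.2.2
    have hEfree : ∀ t ∈ Set.Ioo α b, t ∉ Dn x l n := by
      intro t ht
      obtain ⟨e, he, het⟩ := exists_lt_of_csInf_lt hnemp ht.1
      exact (free_propagate hl n he.1 het.le fun i hi hx =>
        hjump i hi ⟨lt_of_le_of_lt he.2.1 hx.1, lt_of_le_of_lt hx.2 ht.2⟩).1
    have hslope : ∀ t ∈ Set.Ioo α b, ∀ t' ∈ Set.Ioo α b, t ≤ t' →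
        Mn x l n t' + t' = Mn x l n t + t := by
      intro t ht t' ht' htt'
      have hfree := hEfree t ht
      have h1 := (free_propagate hl n hfree htt' fun i hi hx =>
        hjump i hi ⟨lt_of_le_of_lt hαa (lt_of_lt_of_le ht.1 hx.1.le),
          lt_of_le_of_lt hx.2 ht'.2⟩).2
      have h2 : Zn x l n t ≤ Mn x l n t :=
        le_of_not_gt fun hlt => hfree ((mem_Dn_iff hl n).2 hlt)
      have h3 : Mn x l n t ≤ Zn x l n t := Mn_le_Zn hl n t
      have : Zn x l n t = Mn x l n t := le_antisymm h2 h3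
      rw [h1, this]; ring
    -- `M · + ·` is constant on `[α, b]`
    set m : ℝ := (α + b) / 2 with hm
    have hmmem : m ∈ Set.Ioo α b := ⟨by simp only [hm]; linarith, by simp only [hm]; linarith⟩
    have hconst : ∀ t ∈ Set.Ioo α b, Mn x l n t + t = Mn x l n m + m := by
      intro t ht
      rcases le_total t m with h' | h'
      · have := hslope t ht m hmmem h'
        linarith
      · exact hslope m hmmem t ht h'
    have hclosed2 : IsClosed {t | Mn x l n t + t = Mn x l n m + m} :=
      isClosed_eq ((Mn_continuous hl n).add continuous_id) continuous_const
    have hIccsub : Set.Icc α b ⊆ {t | Mn x l n t + t = Mn x l n m + m} := by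
      rw [← closure_Ioo hαb.ne]
      exact closure_minimal hconst hclosed2
    have hαval : Mn x l n α + α = Mn x l n m + m := hIccsub ⟨le_rfl, hαb.le⟩
    have hbval : Mn x l n b + b = Mn x l n m + m := hIccsub ⟨hαb.le, le_rfl⟩
    have hMαb : Mn x l n α - Mn x l n b = b - α := by linarith
    -- `M` constant on `[a, α]`
    have hMaα : Mn x l n α = Mn x l n a := by
      rcases eq_or_lt_of_le hαa with heq | haα
      · rw [← heq]
      · refine hMconst a α haα hαb.le le_rfl fun t ht => ?_
        by_contra hfree
        exact absurd (csInf_le hbdd ⟨hfree, ht.1.le, lt_trans ht.2 hαb⟩)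
          (not_le.2 ht.2)
    -- the free part of `[a, b)` is `[α, b)` up to the single point `α`
    have hsub1 : (Dn x l n)ᶜ ∩ Set.Ico a b ⊆ Set.Ico α b :=
      fun y hy => ⟨csInf_le hbdd hy, hy.2.2⟩
    have hsub2 : Set.Ioo α b ⊆ (Dn x l n)ᶜ ∩ Set.Ico a b :=
      fun t ht => ⟨hEfree t ht, hαa.trans ht.1.le, ht.2⟩
    have hvol1 : volume ((Dn x l n)ᶜ ∩ Set.Ico a b) ≤ ENNReal.ofReal (b - α) := by
      rw [← Real.volume_Ico]
      exact measure_mono hsub1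
    have hvol2 : ENNReal.ofReal (b - α) ≤ volume ((Dn x l n)ᶜ ∩ Set.Ico a b) := by
      rw [← Real.volume_Ioo]
      exact measure_mono hsub2
    rw [show Mn x l n a - Mn x l n b = b - α by rw [← hMaα]; linarith]
    exact le_antisymm hvol1 hvol2
  · have hempty : (Dn x l n)ᶜ ∩ Set.Ico a b = ∅ :=
      Set.not_nonempty_iff_eq_empty.1 hne
    have hMba : Mn x l n b = Mn x l n a := by
      refine hMconst a b hab' le_rfl le_rfl fun t ht => ?_
      by_contra hfree
      exact hne ⟨t, hfree, ht.1.le, ht.2⟩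
    rw [hempty, hMba]
    simp
include hl in
/-- measure of the free set in terms of the running infimum. -/
lemma vol_free (n : ℕ) {a b : ℝ} (hab : a ≤ b) :
    volume ((Dn x l n)ᶜ ∩ Set.Ico a b) = ENNReal.ofReal (Mn x l n a - Mn x l n b) := by
  have key : ∀ m : ℕ, ∀ a b : ℝ, a ≤ b →
      ((Finset.range n).filter (fun i => x i ∈ Set.Ioo a b)).card ≤ m →
      volume ((Dn x l n)ᶜ ∩ Set.Ico a b) = ENNReal.ofReal (Mn x l n a - Mn x l n b) := by
    intro m
    induction m with
    | zero =>
      intro a b hab hcard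
      refine vol_gap hl n hab fun i hi hx => ?_
      have : i ∈ (Finset.range n).filter (fun i => x i ∈ Set.Ioo a b) :=
        Finset.mem_filter.2 ⟨Finset.mem_range.2 hi, hx⟩
      rw [Finset.card_eq_zero.1 (Nat.le_zero.1 hcard)] at this
      exact absurd this (Finset.notMem_empty i)
    | succ m ih =>
      intro a b hab hcard
      by_cases hax : ∃ i, i ∈ (Finset.range n).filter (fun i => x i ∈ Set.Ioo a b)
      · obtain ⟨i0, hi0⟩ := hax
        have hi0n : i0 ∈ Finset.range n := (Finset.mem_filter.1 hi0).1
        have hx0 : x i0 ∈ Set.Ioo a b := (Finset.mem_filter.1 hi0).2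
        set c : ℝ := x i0 with hc
        have hsplit : (Dn x l n)ᶜ ∩ Set.Ico a b
            = ((Dn x l n)ᶜ ∩ Set.Ico a c) ∪ ((Dn x l n)ᶜ ∩ Set.Ico c b) := by
          rw [← Set.inter_union_distrib_left,
            Set.Ico_union_Ico_eq_Ico hx0.1.le hx0.2.le]
        have hdisj : Disjoint ((Dn x l n)ᶜ ∩ Set.Ico a c) ((Dn x l n)ᶜ ∩ Set.Ico c b) :=
          (Set.Ico_disjoint_Ico_same).mono
            Set.inter_subset_right Set.inter_subset_right
        have hmeas : MeasurableSet ((Dn x l n)ᶜ ∩ Set.Ico c b) :=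
          ((measurableSet_Dn hl n).compl.inter measurableSet_Ico)
        have hcard1 :
            ((Finset.range n).filter (fun i => x i ∈ Set.Ioo a c)).card ≤ m := by
          have hsub : (Finset.range n).filter (fun i => x i ∈ Set.Ioo a c)
              ⊆ ((Finset.range n).filter (fun i => x i ∈ Set.Ioo a b)).erase i0 := by
            intro j hj
            obtain ⟨hj1, hj2⟩ := Finset.mem_filter.1 hj
            refine Finset.mem_erase.2 ⟨?_, Finset.mem_filter.2
              ⟨hj1, hj2.1, hj2.2.trans hx0.2⟩⟩
            intro hji
            rw [hji] at hj2
            exact absurd hj2.2 (lt_irrefl c)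
          have := Finset.card_le_card hsub
          have h2 := Finset.card_erase_of_mem hi0
          omega
        have hcard2 :
            ((Finset.range n).filter (fun i => x i ∈ Set.Ioo c b)).card ≤ m := by
          have hsub : (Finset.range n).filter (fun i => x i ∈ Set.Ioo c b)
              ⊆ ((Finset.range n).filter (fun i => x i ∈ Set.Ioo a b)).erase i0 := by
            intro j hj
            obtain ⟨hj1, hj2⟩ := Finset.mem_filter.1 hj
            refine Finset.mem_erase.2 ⟨?_, Finset.mem_filter.2
              ⟨hj1, hx0.1.trans hj2.1, hj2.2⟩⟩
            intro hji
            rw [hji] at hj2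
            exact absurd hj2.1 (lt_irrefl c)
          have := Finset.card_le_card hsub
          have h2 := Finset.card_erase_of_mem hi0
          omega
        rw [hsplit, measure_union hdisj hmeas, ih a c hx0.1.le hcard1,
          ih c b hx0.2.le hcard2,
          ← ENNReal.ofReal_add (by
            have := Mn_anti (x := x) (l := l) hl n hx0.1.le; linarith) (by
            have := Mn_anti (x := x) (l := l) hl n hx0.2.le; linarith)]
        ring_nf
      · push_neg at hax
        refine vol_gap hl n hab fun i hi hx => ?_
        exact hax i (Finset.mem_filter.2 ⟨Finset.mem_range.2 hi, hx⟩)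
  exact key _ a b hab le_rfl

lemma exists_Mn_le (hl : ∀ i, 0 < l i) (n : ℕ) (a v : ℝ) :
    ∃ b, a ≤ b ∧ Mn x l n b ≤ v := by
  refine ⟨max a (∑ i ∈ Finset.range n, l i - v), le_max_left _ _, ?_⟩
  calc Mn x l n _ ≤ Zn x l n _ := Mn_le_Zn hl n _
  _ ≤ ∑ i ∈ Finset.range n, l i - max a (∑ i ∈ Finset.range n, l i - v) := by
      have := fn_le (x := x) hl n (max a (∑ i ∈ Finset.range n, l i - v))
      simp only [Zn]; linarith
  _ ≤ v := by
      have := le_max_right a (∑ i ∈ Finset.range n, l i - v)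
      linarith

section step

variable (hl : ∀ i, 0 < l i) (k : ℕ)
include hl

lemma T_spec :
    x k ≤ sInf {y | x k ≤ y ∧ Mn x l k y = Mn x l k (x k) - l k} ∧
      Mn x l k (sInf {y | x k ≤ y ∧ Mn x l k y = Mn x l k (x k) - l k})
        = Mn x l k (x k) - l k := by
  set T := {y | x k ≤ y ∧ Mn x l k y = Mn x l k (x k) - l k} with hT
  have hTne : T.Nonempty := by
    obtain ⟨b, hab, hb⟩ := exists_Mn_le (x := x) hl k (x k) (Mn x l k (x k) - l k)
    have hsub := intermediate_value_Icc' hab (Mn_continuous (x := x) (l := l) hl k).continuousOn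
    have hmem : Mn x l k (x k) - l k ∈ Set.Icc (Mn x l k b) (Mn x l k (x k)) :=
      ⟨hb, by have := (hl k).le; linarith⟩
    obtain ⟨y, hy, hyv⟩ := hsub hmem
    exact ⟨y, hy.1, hyv⟩
  have hTcl : IsClosed T :=
    IsClosed.inter isClosed_Ici (isClosed_eq (Mn_continuous hl k) continuous_const)
  have hTbdd : BddBelow T := ⟨x k, fun y hy => hy.1⟩
  have := hTcl.csInf_mem hTne hTbdd
  exact ⟨this.1, this.2⟩

lemma T_min {y : ℝ} (hy : x k ≤ y)
    (hlt : y < sInf {y | x k ≤ y ∧ Mn x l k y = Mn x l k (x k) - l k}) :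
    Mn x l k (x k) - l k < Mn x l k y := by
  set T := {y | x k ≤ y ∧ Mn x l k y = Mn x l k (x k) - l k} with hT
  have hTbdd : BddBelow T := ⟨x k, fun y hy => hy.1⟩
  have h1 : Mn x l k (sInf T) ≤ Mn x l k y := Mn_anti hl k hlt.le
  rcases lt_or_eq_of_le ((T_spec (x := x) hl k).2 ▸ h1) with h | h
  · exact h
  · exact absurd (csInf_le hTbdd ⟨hy, h.symm⟩) (not_le.2 hlt)

lemma Dn_succ :
    Dn x l (k + 1) = Dn x l k ∪
      Set.Ico (x k) (sInf {y | x k ≤ y ∧ Mn x l k y = Mn x l k (x k) - l k}) := by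
  set T := {y | x k ≤ y ∧ Mn x l k y = Mn x l k (x k) - l k} with hT
  set w : ℝ := sInf T with hw
  obtain ⟨hxw, hMw⟩ := T_spec (x := x) hl k
  have hZsucc : ∀ t, Zn x l (k + 1) t = Zn x l k t + (if x k ≤ t then l k else 0) := by
    intro t
    simp only [Zn, fn, Finset.sum_range_succ]
    ring
  ext z
  simp only [Set.mem_union, Set.mem_Ico]
  rcases lt_or_ge z (x k) with hz | hz
  · constructor
    · rintro ⟨y, hy, hZ⟩
      rw [hZsucc, hZsucc, if_neg (not_le.2 hz),
        if_neg (not_le.2 (lt_of_le_of_lt hy hz))] at hZ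
      exact Or.inl ⟨y, hy, by linarith⟩
    · rintro (⟨y, hy, hZ⟩ | ⟨h1, h2⟩)
      · exact ⟨y, hy, by
          rw [hZsucc, hZsucc, if_neg (not_le.2 hz),
            if_neg (not_le.2 (lt_of_le_of_lt hy hz))]
          linarith⟩
      · exact absurd h1 (not_le.2 hz)
  · constructor
    · intro hmem
      by_contra hcon
      push_neg at hcon
      obtain ⟨hnotD, hwz⟩ := hcon
      have hwz' : w ≤ z := hwz hz
      have hfree := (notMem_Dn_iff k).1 hnotD
      have hZzM : Zn x l k z ≤ Mn x l k z :=
        le_of_not_gt fun hlt => hnotD ((mem_Dn_iff hl k).2 hlt)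
      have hMzw : Mn x l k z ≤ Mn x l k w := Mn_anti hl k hwz'
      have : z ∉ Dn x l (k + 1) := by
        refine (notMem_Dn_iff (k + 1)).2 fun y hy => ?_
        rw [hZsucc, hZsucc, if_pos hz]
        rcases le_or_gt (x k) y with hxy | hxy
        · rw [if_pos hxy]
          have := hfree y hy
          linarith
        · rw [if_neg (not_le.2 hxy)]
          have h1 : Mn x l k (x k) ≤ Zn x l k y := Mn_le hl k hxy.le
          linarith [hMw]
      exact this hmem
    · rintro (⟨y, hy, hZ⟩ | ⟨h1, h2⟩)
      · refine ⟨y, hy, ?_⟩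
        rw [hZsucc, hZsucc, if_pos hz]
        rcases le_or_gt (x k) y with hxy | hxy
        · rw [if_pos hxy]; linarith
        · rw [if_neg (not_le.2 hxy)]
          have := hl k
          linarith
      · by_contra hnot
        have h := (notMem_Dn_iff (k + 1)).1 hnot
        have hxlow : ∀ y, y < x k → Zn x l k z + l k ≤ Zn x l k y := by
          intro y hy
          have := h y (hy.le.trans hz)
          rw [hZsucc, hZsucc, if_pos hz, if_neg (not_le.2 hy)] at this
          linarith
        have hMxk : Zn x l k z + l k ≤ Mn x l k (x k) :=
          Mn_ge_of_lt hl k hxlow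
        have hZzM : Mn x l k z ≤ Zn x l k z := Mn_le_Zn hl k z
        have := T_min (x := x) hl k h1 h2
        linarith

end step

include hl in
lemma cover_eq_Dn (n : ℕ) : cover x l n = Dn x l n := by
  induction n with
  | zero =>
    have h0 : cover x l 0 = (∅ : Set ℝ) := rfl
    rw [h0]
    refine (Set.eq_empty_iff_forall_notMem.2 fun z hz => ?_).symm
    obtain ⟨y, hy, hZ⟩ := hz
    simp only [Zn, fn, Finset.range_zero, Finset.sum_empty, zero_sub] at hZ
    linarith
  | succ k ih =>
    have hstep : cover x l (k + 1) = cover x l k ∪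
        Set.Ico (x k) (sInf {y : ℝ | x k ≤ y ∧
          volume ((cover x l k)ᶜ ∩ Set.Ico (x k) y) = ENNReal.ofReal (l k)}) := rfl
    rw [hstep, ih]
    have hset : {y : ℝ | x k ≤ y ∧
        volume ((Dn x l k)ᶜ ∩ Set.Ico (x k) y) = ENNReal.ofReal (l k)}
        = {y | x k ≤ y ∧ Mn x l k y = Mn x l k (x k) - l k} := by
      ext y
      simp only [Set.mem_setOf_eq]
      refine and_congr_right fun hxy => ?_
      rw [vol_free hl k hxy,
        ENNReal.ofReal_eq_ofReal_iff
          (by have := Mn_anti (x := x) (l := l) hl k hxy; linarith) (hl k).le]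
      constructor <;> intro h <;> linarith
    rw [hset, ← Dn_succ hl k]

/-- indicator summand of files located in `(a, b]` -/
noncomputable def ind (x l : ℕ → ℝ) (a b : ℝ) (i : ℕ) : ℝ := if a < x i ∧ x i ≤ b then l i else 0

section tsumpart

variable (hl : ∀ i, 0 < l i)
variable (hsum : ∀ L : ℝ, 0 ≤ L →
  Summable (fun i : ℕ => if x i ∈ Set.Icc (-L) L then l i else 0))

include hl in
lemma ind_nonneg (a b : ℝ) (i : ℕ) : 0 ≤ ind x l a b i := by
  unfold ind; split
  · exact (hl i).le
  · exact le_rfl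

include hl hsum in
lemma summable_ind (a b : ℝ) : Summable (ind x l a b) := by
  set L : ℝ := max |a| |b| with hL
  refine Summable.of_nonneg_of_le (ind_nonneg hl a b) (fun i => ?_)
    (hsum L (le_trans (abs_nonneg a) (le_max_left _ _)))
  unfold ind
  by_cases hc : a < x i ∧ x i ≤ b
  · rw [if_pos hc, if_pos]
    constructor
    · have h1 : -L ≤ -|a| := neg_le_neg (le_max_left _ _)
      have h2 : -|a| ≤ a := neg_abs_le a
      linarith [hc.1]
    · exact hc.2.trans ((le_abs_self b).trans (le_max_right _ _))
  · rw [if_neg hc]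
    split
    · exact (hl i).le
    · exact le_rfl

lemma ind_split (a b xi li : ℝ) (hab : a ≤ b) :
    (if a < xi ∧ xi ≤ b then li else 0)
      = ((if 0 < xi ∧ xi ≤ b then li else 0) + (if a < xi ∧ xi ≤ 0 then li else 0))
        - ((if 0 < xi ∧ xi ≤ a then li else 0) + (if b < xi ∧ xi ≤ 0 then li else 0)) := by
  split_ifs <;>
    first
      | linarith
      | (simp only [not_and_or, not_lt, not_le] at *
         casesm* _ ∨ _, _ ∧ _ <;> linarith)

include hl hsum in
lemma Ydiff {a b : ℝ} (hab : a ≤ b) :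
    Yinf x l b - Yinf x l a = (∑' i, ind x l a b i) - (b - a) := by
  have hAb : Summable (ind x l 0 b) := summable_ind hl hsum 0 b
  have hAa : Summable (ind x l 0 a) := summable_ind hl hsum 0 a
  have hBb : Summable (ind x l b 0) := summable_ind hl hsum b 0
  have hBa : Summable (ind x l a 0) := summable_ind hl hsum a 0
  have key : ∑' i, ind x l a b i
      = ((∑' i, ind x l 0 b i) + (∑' i, ind x l a 0 i))
        - ((∑' i, ind x l 0 a i) + (∑' i, ind x l b 0 i)) := by
    rw [← Summable.tsum_add hAb hBa, ← Summable.tsum_add hAa hBb, ← Summable.tsum_sub (hAb.add hBa) (hAa.add hBb)]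
    exact tsum_congr fun i => ind_split a b (x i) (l i) hab
  have hYb : Yinf x l b = (∑' i, ind x l 0 b i) - (∑' i, ind x l b 0 i) - b := rfl
  have hYa : Yinf x l a = (∑' i, ind x l 0 a i) - (∑' i, ind x l a 0 i) - a := rfl
  rw [hYb, hYa, key]
  ring

include hl in
lemma Zn_diff (n : ℕ) {a b : ℝ} (hab : a ≤ b) :
    Zn x l n b - Zn x l n a = (∑ i ∈ Finset.range n, ind x l a b i) - (b - a) := by
  have hfn : fn x l n b - fn x l n a = ∑ i ∈ Finset.range n, ind x l a b i := by
    rw [fn, fn, ← Finset.sum_sub_distrib]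
    refine Finset.sum_congr rfl fun i _ => ?_
    unfold ind
    split_ifs <;>
      first
        | linarith
        | (simp only [not_and_or, not_lt, not_le] at *
           casesm* _ ∨ _, _ ∧ _ <;> linarith)
  simp only [Zn]
  linarith

include hl hsum in
lemma Y_eq_Zn_add_tail (n : ℕ) {a b : ℝ} (hab : a ≤ b) :
    Yinf x l b - Yinf x l a
      = (Zn x l n b - Zn x l n a) + ∑' i, ind x l a b (i + n) := by
  have h1 := Ydiff hl hsum hab
  have h2 := Zn_diff (x := x) hl n hab
  have h3 := Summable.sum_add_tsum_nat_add (f := ind x l a b) n (summable_ind hl hsum a b)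
  linarith

include hl in
lemma tail_nonneg (n : ℕ) (a b : ℝ) : 0 ≤ ∑' i, ind x l a b (i + n) :=
  tsum_nonneg fun i => ind_nonneg hl a b _

end tsumpart

end CoverAux

theorem cover_of_tendsto_atTop
    (x l : ℕ → ℝ) (hl : ∀ i, 0 < l i)
    (hsum : ∀ L : ℝ, 0 ≤ L →
      Summable (fun i : ℕ => if x i ∈ Set.Icc (-L) L then l i else 0))
    (hY : Tendsto (Yinf x l) atBot atTop) :
    (⋃ n : ℕ, cover x l n) = {z : ℝ | Iinf x l z < (Yinf x l z : EReal)} ∧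
      (⋃ n : ℕ, cover x l n) ≠ Set.univ := by
  classical
  have hIiff : ∀ z : ℝ, (Iinf x l z < (Yinf x l z : EReal)) ↔
      ∃ y ≤ z, Yinf x l y < Yinf x l z := by
    intro z
    rw [Iinf]
    constructor
    · intro h
      rw [iInf_lt_iff] at h
      obtain ⟨y, hy⟩ := h
      rw [iInf_lt_iff] at hy
      obtain ⟨hyz, hlt⟩ := hy
      exact ⟨y, hyz, EReal.coe_lt_coe_iff.1 hlt⟩
    · rintro ⟨y, hyz, hlt⟩
      exact lt_of_le_of_lt (iInf_le_of_le y (iInf_le _ hyz)) (EReal.coe_lt_coe_iff.2 hlt)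
  have hpart1 : (⋃ n : ℕ, cover x l n) = {z : ℝ | Iinf x l z < (Yinf x l z : EReal)} := by
    ext z
    simp only [Set.mem_iUnion, Set.mem_setOf_eq, hIiff z, CoverAux.cover_eq_Dn hl]
    constructor
    · rintro ⟨n, y, hy, hZ⟩
      refine ⟨y, hy, ?_⟩
      have h1 := CoverAux.Y_eq_Zn_add_tail hl hsum n hy
      have h2 := CoverAux.tail_nonneg (x := x) hl n y z
      linarith
    · rintro ⟨y, hy, hlt⟩
      have hε0 : 0 < Yinf x l z - Yinf x l y := by linarith
      obtain ⟨n, hn⟩ :=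
        ((tendsto_sum_nat_add (CoverAux.ind x l y z)).eventually_lt_const hε0).exists
      have h1 := CoverAux.Y_eq_Zn_add_tail hl hsum n hy
      exact ⟨n, y, hy, by linarith⟩
  refine ⟨hpart1, ?_⟩
  rw [hpart1, Set.ne_univ_iff_exists_notMem]
  obtain ⟨A, hA⟩ := eventually_atBot.1 (hY.eventually (eventually_ge_atTop 1))
  set S := {y : ℝ | Yinf x l y < 1} with hS
  have hY0 : Yinf x l 0 = 0 := by simp [Yinf]
  have h0S : (0 : ℝ) ∈ S := by
    rw [hS, Set.mem_setOf_eq, hY0]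
    norm_num
  have hbdd : BddBelow S :=
    ⟨A, fun y hy => le_of_not_gt fun hlt => absurd (hA y hlt.le) (not_le.2 hy)⟩
  set u := sInf S with hu
  have hu_le : ∀ y ∈ S, u ≤ y := fun y hy => csInf_le hbdd hy
  have hYu : Yinf x l u ≤ 1 := by
    refine le_of_forall_pos_le_add fun ε hε => ?_
    obtain ⟨y, hyS, hyu⟩ := exists_lt_of_csInf_lt ⟨0, h0S⟩
      (show sInf S < u + ε by rw [← hu]; linarith)
    have huy : u ≤ y := hu_le y hyS
    have h1 := CoverAux.Ydiff hl hsum huy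
    have h2 : 0 ≤ ∑' i, CoverAux.ind x l u y i :=
      tsum_nonneg fun i => CoverAux.ind_nonneg hl u y i
    have h3 : Yinf x l y < 1 := hyS
    linarith
  refine ⟨u, ?_⟩
  rw [Set.mem_setOf_eq, hIiff u]
  rintro ⟨y, hyu, hlt⟩
  rcases lt_or_eq_of_le hyu with h | h
  · have hyS : y ∉ S := fun hyS => absurd (hu_le y hyS) (not_le.2 h)
    have h1 : 1 ≤ Yinf x l y := le_of_not_gt hyS
    linarith
  · rw [h] at hlt
    exact lt_irrefl _ hlt
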